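/- Let h_1, ..., h_n : X → ℝ be hypotheses, y : X → ℝ a target, and μ a probability measure on X. Define the average hypothesis h̄(x) = (1/n) ∑_k h_k(x). Then the squared error of the average hypothesis equals the average squared error of the individual hypotheses minus the average squared discrepancy: E_x[(h̄(x) − y(x))²] = (1/n) ∑_k E_x[(h_k(x) − y(x))²] − (1/n) ∑_k E_x[(h_k(x) − h̄(x))²]. -/

import Mathlib

open MeasureTheory

/-- Error-discrepancy (ambiguity) decomposition for ensembles. -/
theorem stmt_0 {X : Type*} [MeasurableSpace X] (μ : Measure X) [IsProbabilityMeasure μ]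
    (n : ℕ) (hn : 0 < n) (h : Fin n → X → ℝ) (y : X → ℝ)
    (hh : ∀ k, MemLp (h k) 2 μ) (hy : MemLp y 2 μ) :
    ∫ x, ((∑ k, h k x) / n - y x) ^ 2 ∂μ =
      (1 / n : ℝ) * ∑ k, ∫ x, (h k x - y x) ^ 2 ∂μ -
      (1 / n : ℝ) * ∑ k, ∫ x, (h k x - (∑ k', h k' x) / n) ^ 2 ∂μ := by
  have hn' : (n : ℝ) ≠ 0 := Nat.cast_ne_zero.mpr hn.ne'
  set g : X → ℝ := fun x => (∑ k, h k x) / n with hgdef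
  have hg : MemLp g 2 μ := by
    have hsum : MemLp (fun x => ∑ k, h k x) 2 μ := by
      have := memLp_finset_sum' (μ := μ) Finset.univ (fun k _ => hh k)
      convert this using 1
      ext x
      simp
    simpa [hgdef, div_eq_inv_mul] using hsum.const_mul ((n : ℝ)⁻¹)
  -- pointwise identity
  have key : ∀ x, ((∑ k, h k x) / n - y x) ^ 2 =
      (1 / n : ℝ) * ∑ k, (h k x - y x) ^ 2 -
      (1 / n : ℝ) * ∑ k, (h k x - (∑ k', h k' x) / n) ^ 2 := by
    intro x
    have hs : (∑ k, h k x) = n * g x := by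
      simp only [hgdef]
      field_simp
    rw [show ((∑ k, h k x) / n : ℝ) = g x from rfl]
    have expand : ∀ c : ℝ, ∑ k, (h k x - c) ^ 2 =
        ∑ k, (h k x) ^ 2 - 2 * c * (∑ k, h k x) + n * c ^ 2 := by
      intro c
      simp only [sub_sq, Finset.sum_add_distrib, Finset.sum_sub_distrib,
        Finset.sum_const, Finset.card_fin, nsmul_eq_mul, ← Finset.sum_mul,
        ← Finset.mul_sum]
      ring
    rw [expand, expand, hs]
    field_simp
    ring
  have I1 : ∀ k : Fin n, Integrable (fun x => (h k x - y x) ^ 2) μ := by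
    intro k
    simpa [sq] using ((hh k).sub hy).integrable_sq
  have I2 : ∀ k : Fin n, Integrable (fun x => (h k x - g x) ^ 2) μ := by
    intro k
    simpa [sq] using ((hh k).sub hg).integrable_sq
  calc ∫ x, ((∑ k, h k x) / n - y x) ^ 2 ∂μ
      = ∫ x, ((1 / n : ℝ) * ∑ k, (h k x - y x) ^ 2 -
          (1 / n : ℝ) * ∑ k, (h k x - (∑ k', h k' x) / n) ^ 2) ∂μ := by
        exact integral_congr_ae (Filter.Eventually.of_forall key)
    _ = (1 / n : ℝ) * ∑ k, ∫ x, (h k x - y x) ^ 2 ∂μ -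
        (1 / n : ℝ) * ∑ k, ∫ x, (h k x - (∑ k', h k' x) / n) ^ 2 ∂μ := by
        rw [integral_sub (((integrable_finset_sum _ fun k _ => I1 k).const_mul _))
          (((integrable_finset_sum _ fun k _ => I2 k).const_mul _)),
          integral_const_mul, integral_const_mul,
          integral_finset_sum _ fun k _ => I1 k,
          integral_finset_sum _ fun k _ => I2 k]
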